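/- arXiv:0903.2394 — 4 statements merged into one kernel-verified Lean document; each statement's English description precedes it below -/
import Mathlib

section
/- Let f be a holomorphic function defined near 0 in ℂ with f(z) = e^{2πiα} z + O(z^N) for some N ≥ 2 and α real. Then there exist constants C > 0 and ε₀ > 0 such that for all z with |z| ≤ ε₀, the first ⌊C|z|^{-(N-1)}⌋ iterates f^k(z) are defined and satisfy |f^k(z)| ≤ 2|z|. -/
open Filter Function

/-- Lemma 3.4: for f(z) = e^{2πiα}z + O(z^N), at least ⌊C|z|^{-(N-1)}⌋ iterates
of f are defined on z (they stay in the domain {|w| ≤ r}) and satisfy |f^k(z)| ≤ 2|z|. -/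
theorem stmt0 (f : ℂ → ℂ) (α : ℝ) (N : ℕ) (hN : 2 ≤ N)
    (r C₁ : ℝ) (hr : 0 < r) (hC₁ : 0 < C₁)
    (hf : AnalyticAt ℂ f 0) (hf0 : f 0 = 0)
    (hfN : ∀ z : ℂ, ‖z‖ ≤ r →
      ‖f z - Complex.exp (2 * Real.pi * Complex.I * α) * z‖ ≤ C₁ * ‖z‖ ^ N) :
    ∃ C > (0:ℝ), ∃ ε₀ > (0:ℝ), ε₀ ≤ r ∧
      ∀ z : ℂ, ‖z‖ ≤ ε₀ →
        ∀ k : ℕ, (k : ℝ) ≤ C * ‖z‖ ^ (-((N : ℝ) - 1)) →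
          ∀ j ≤ k, ‖f^[j] z‖ ≤ 2 * ‖z‖ ∧ ‖f^[j] z‖ ≤ r := by
  refine ⟨1 / (C₁ * 2 ^ N), by positivity, r / 2, by positivity, by linarith, ?_⟩
  intro z hz k hk j hjk
  by_cases hz0 : z = 0
  · have hfix : f^[j] 0 = 0 := (IsFixedPt.iterate hf0 j)
    rw [hz0, hfix]
    simp [hr.le]
  have hzpos : 0 < ‖z‖ := norm_pos_iff.mpr hz0
  have hexp : ‖Complex.exp (2 * Real.pi * Complex.I * α)‖ = 1 := by
    rw [Complex.norm_exp]
    simp [Complex.mul_re, Complex.mul_im]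
  have hpow : ‖z‖ ^ (-((N : ℝ) - 1)) * ‖z‖ ^ (N : ℕ) = ‖z‖ := by
    rw [← Real.rpow_natCast ‖z‖ N, ← Real.rpow_add hzpos]
    norm_num
  have hbig' : (k : ℝ) * (C₁ * 2 ^ N * ‖z‖ ^ N) ≤ ‖z‖ := by
    have h1 : (k : ℝ) * (C₁ * 2 ^ N * ‖z‖ ^ N)
        ≤ (1 / (C₁ * 2 ^ N) * ‖z‖ ^ (-((N : ℝ) - 1))) * (C₁ * 2 ^ N * ‖z‖ ^ N) :=
      mul_le_mul_of_nonneg_right hk (by positivity)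
    calc (k : ℝ) * (C₁ * 2 ^ N * ‖z‖ ^ N)
        ≤ (1 / (C₁ * 2 ^ N) * ‖z‖ ^ (-((N : ℝ) - 1))) * (C₁ * 2 ^ N * ‖z‖ ^ N) := h1
      _ = ‖z‖ ^ (-((N : ℝ) - 1)) * ‖z‖ ^ (N : ℕ) := by field_simp
      _ = ‖z‖ := hpow
  have main : ∀ j, j ≤ k → ‖f^[j] z‖ ≤ ‖z‖ + j * (C₁ * 2 ^ N * ‖z‖ ^ N) := by
    intro j
    induction j with
    | zero => intro _; simp
    | succ j ih =>
      intro hj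
      have hj' : j ≤ k := Nat.le_of_succ_le hj
      have h1 := ih hj'
      have hmono : (j : ℝ) * (C₁ * 2 ^ N * ‖z‖ ^ N) ≤ (k : ℝ) * (C₁ * 2 ^ N * ‖z‖ ^ N) :=
        mul_le_mul_of_nonneg_right (Nat.cast_le.mpr hj') (by positivity)
      have h2 : ‖f^[j] z‖ ≤ 2 * ‖z‖ := by linarith
      have hr2 : ‖f^[j] z‖ ≤ r := by linarith
      have hstep := hfN (f^[j] z) hr2
      have hkey : ‖f (f^[j] z)‖ ≤ ‖f^[j] z‖ + C₁ * ‖f^[j] z‖ ^ N := by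
        have h3 := norm_add_le
          (f (f^[j] z) - Complex.exp (2 * Real.pi * Complex.I * α) * f^[j] z)
          (Complex.exp (2 * Real.pi * Complex.I * α) * f^[j] z)
        rw [sub_add_cancel, norm_mul, hexp, one_mul] at h3
        linarith
      have hpowle : C₁ * ‖f^[j] z‖ ^ N ≤ C₁ * 2 ^ N * ‖z‖ ^ N := by
        have : ‖f^[j] z‖ ^ N ≤ (2 * ‖z‖) ^ N := pow_le_pow_left₀ (norm_nonneg _) h2 N
        rw [mul_pow] at this
        nlinarith
      rw [Function.iterate_succ_apply']
      push_cast
      nlinarith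
  have h1 := main j hjk
  have hmono : (j : ℝ) * (C₁ * 2 ^ N * ‖z‖ ^ N) ≤ (k : ℝ) * (C₁ * 2 ^ N * ‖z‖ ^ N) :=
    mul_le_mul_of_nonneg_right (Nat.cast_le.mpr hjk) (by positivity)
  constructor <;> linarith
end

section
/- Let φ(t) = t + C₁ t^N for constants C₁ > 0 and integer N ≥ 2. Then there exist t₀ > 0 and C₂ > 0 such that for all 0 < t ≤ t₀ and all natural numbers k ≤ 1/(2 C₂ t^{N-1}), the k-th iterate satisfies φ^k(t) ≤ t (1 - k C₂ t^{N-1})^{-1/(N-1)}, and in particular φ^k(t) ≤ 2t. -/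
open Function

private lemma aux_pow (m : ℕ) (u : ℝ) (hu0 : 0 ≤ u) (hu1 : u ≤ 1) :
    (1 + u) ^ m ≤ 1 + (2 ^ m - 1) * u := by
  induction m with
  | zero => simp
  | succ m ih =>
    have h2 : (1:ℝ) ≤ 2 ^ m := one_le_pow₀ (by norm_num)
    calc (1+u)^(m+1) = (1+u)^m * (1+u) := pow_succ _ _
      _ ≤ (1 + (2^m-1)*u) * (1+u) :=
          mul_le_mul_of_nonneg_right ih (by linarith)
      _ ≤ 1 + (2^(m+1)-1)*u := by
          have h3 : (2:ℝ)^(m+1) = 2 * 2^m := by ring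
          nlinarith [mul_nonneg (mul_nonneg (sub_nonneg.2 h2) hu0) (sub_nonneg.2 hu1)]

private lemma key_step (C₁ : ℝ) (hC₁ : 0 < C₁) (m : ℕ) (hm : 1 ≤ m)
    (t a b : ℝ) (ht : 0 < t) (htm : C₁ * t ^ m ≤ 1/2)
    (hb2 : 1/2 ≤ b) (hba : b ≤ a) (ha1 : a ≤ 1)
    (hab : a - b = 2 ^ (m+1) * C₁ * t ^ m) :
    t * a ^ (-(1/(m:ℝ))) + C₁ * (t * a ^ (-(1/(m:ℝ)))) ^ (m+1)
      ≤ t * b ^ (-(1/(m:ℝ))) := by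
  have hb : (0:ℝ) < b := by linarith
  have ha : (0:ℝ) < a := lt_of_lt_of_le hb hba
  have hmR : (0:ℝ) < (m:ℝ) := by exact_mod_cast Nat.lt_of_lt_of_le Nat.zero_lt_one hm
  set e : ℝ := 1/(m:ℝ) with he
  have hme : (m:ℝ) * e = 1 := by rw [he]; exact mul_one_div_cancel hmR.ne'
  have hae : (0:ℝ) < a ^ (-e) := Real.rpow_pos_of_pos ha _
  have hpow : (a ^ (-e)) ^ m = a⁻¹ := by
    rw [← Real.rpow_natCast (a ^ (-e)) m, ← Real.rpow_mul ha.le,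
      show (-e) * (m:ℝ) = -1 by rw [neg_mul, mul_comm, hme], Real.rpow_neg_one]
  set u : ℝ := C₁ * t ^ m / a with hu
  have hu0 : 0 ≤ u := by positivity
  have hua : u * a = C₁ * t ^ m := div_mul_cancel₀ _ ha.ne'
  have hu1 : u ≤ 1 := by
    rw [hu, div_le_one ha]; linarith
  have hb1 : b ≤ 1 := le_trans hba ha1
  have h2m : (1:ℝ) ≤ 2 ^ m := one_le_pow₀ (by norm_num)
  have hkey : (1 + u) ^ m ≤ a / b := by
    calc (1+u)^m ≤ 1 + (2^m - 1) * u := aux_pow m u hu0 hu1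
      _ ≤ 1 + (a - b) := by
          have h3 : (2:ℝ)^(m+1) = 2 * 2^m := by ring
          nlinarith [mul_nonneg (sub_nonneg.2 h2m) hu0]
      _ ≤ a / b := by
          rw [le_div_iff₀ hb]
          nlinarith [mul_nonneg (sub_nonneg.2 hba) (sub_nonneg.2 hb1)]
  have h1p : (0:ℝ) ≤ 1 + u := by linarith
  have hroot : 1 + u ≤ (a/b) ^ e := by
    have h1 : ((1+u)^m : ℝ) ^ e ≤ (a/b) ^ e :=
      Real.rpow_le_rpow (by positivity) hkey (by positivity)
    rwa [← Real.rpow_natCast (1+u) m, ← Real.rpow_mul h1p, hme, Real.rpow_one] at h1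
  have hane : a ^ e ≠ 0 := (Real.rpow_pos_of_pos ha e).ne'
  have hbne : b ^ e ≠ 0 := (Real.rpow_pos_of_pos hb e).ne'
  have hdiv : a ^ (-e) * (a/b) ^ e = b ^ (-e) := by
    rw [Real.div_rpow ha.le hb.le, Real.rpow_neg ha.le, Real.rpow_neg hb.le]
    field_simp
  have expand : t * a ^ (-e) + C₁ * (t * a ^ (-e)) ^ (m+1)
      = (t * a ^ (-e)) * (1 + u) := by
    rw [pow_succ, mul_pow, hpow, hu]
    field_simp
  calc t * a ^ (-e) + C₁ * (t * a ^ (-e)) ^ (m+1)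
      = (t * a ^ (-e)) * (1 + u) := expand
    _ ≤ (t * a ^ (-e)) * ((a/b) ^ e) :=
        mul_le_mul_of_nonneg_left hroot (by positivity)
    _ = t * b ^ (-e) := by rw [mul_assoc, hdiv]

set_option maxHeartbeats 2000000 in
/-- Iterates of φ(t) = t + C₁ t^N satisfy φ^k(t) ≤ t(1 - kC₂t^{N-1})^{-1/(N-1)} ≤ 2t
for k ≤ 1/(2C₂ t^{N-1}). -/
theorem stmt1 (C₁ : ℝ) (hC₁ : 0 < C₁) (N : ℕ) (hN : 2 ≤ N) :
    ∃ t₀ > (0:ℝ), ∃ C₂ > (0:ℝ),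
      ∀ t : ℝ, 0 < t → t ≤ t₀ →
        ∀ k : ℕ, (k : ℝ) ≤ 1 / (2 * C₂ * t ^ (N - 1)) →
          (fun x : ℝ => x + C₁ * x ^ N)^[k] t
              ≤ t * (1 - (k : ℝ) * C₂ * t ^ (N - 1)) ^ (-(1 / ((N : ℝ) - 1))) ∧
          (fun x : ℝ => x + C₁ * x ^ N)^[k] t ≤ 2 * t := by
  obtain ⟨m, rfl⟩ : ∃ m, N = m + 1 := ⟨N - 1, by omega⟩
  have hm : 1 ≤ m := by omega
  have hmR : (0:ℝ) < (m:ℝ) := by exact_mod_cast Nat.lt_of_lt_of_le Nat.zero_lt_one hm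
  have hsub : m + 1 - 1 = m := by omega
  have hcast : ((m+1:ℕ):ℝ) - 1 = (m:ℝ) := by push_cast; ring
  set C₂ : ℝ := 2 ^ (m+1) * C₁ with hC₂def
  have hC₂ : 0 < C₂ := by positivity
  refine ⟨min 1 (1/(2*C₁)), by positivity, C₂, hC₂, ?_⟩
  intro t ht ht₀ k hk
  rw [hsub] at hk ⊢
  rw [hcast]
  have ht1 : t ≤ 1 := le_trans ht₀ (min_le_left _ _)
  have ht2 : t ≤ 1/(2*C₁) := le_trans ht₀ (min_le_right _ _)
  have htm : C₁ * t ^ m ≤ 1/2 := by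
    have h1 : t ^ m ≤ t ^ 1 := pow_le_pow_of_le_one ht.le ht1 hm
    rw [pow_one] at h1
    have h2 : C₁ * t ≤ C₁ * (1/(2*C₁)) := by nlinarith
    have h3 : C₁ * (1/(2*C₁)) = 1/2 := by field_simp
    nlinarith
  have htpos : (0:ℝ) < C₂ * t ^ m := by positivity
  have hk' : (k:ℝ) * (C₂ * t ^ m) ≤ 1/2 := by
    have h := (le_div_iff₀ (by positivity : (0:ℝ) < 2 * C₂ * t ^ m)).1 hk
    nlinarith
  set e : ℝ := 1/(m:ℝ) with he
  set φ : ℝ → ℝ := fun x : ℝ => x + C₁ * x ^ (m+1) with hφ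
  -- main induction
  have main : ∀ j : ℕ, (j:ℝ) * (C₂ * t ^ m) ≤ 1/2 →
      t ≤ φ^[j] t ∧ φ^[j] t ≤ t * (1 - (j:ℝ) * (C₂ * t ^ m)) ^ (-e) := by
    intro j
    induction j with
    | zero =>
      intro _
      constructor
      · simp
      · simp
    | succ j ih =>
      intro hj1
      have hjle : (j:ℝ) * (C₂ * t ^ m) ≤ 1/2 := by
        push_cast at hj1 ⊢
        nlinarith
      obtain ⟨hlo, hhi⟩ := ih hjle
      set x : ℝ := φ^[j] t with hxdef
      set a : ℝ := 1 - (j:ℝ) * (C₂ * t ^ m) with hadef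
      set b : ℝ := 1 - ((j+1:ℕ):ℝ) * (C₂ * t ^ m) with hbdef
      have hb2 : 1/2 ≤ b := by
        push_cast at hj1; rw [hbdef]; push_cast; linarith
      have hba : b ≤ a := by
        rw [hadef, hbdef]; push_cast; nlinarith
      have ha1 : a ≤ 1 := by
        rw [hadef]; nlinarith [mul_nonneg (Nat.cast_nonneg j : (0:ℝ) ≤ j) htpos.le]
      have hab : a - b = 2 ^ (m+1) * C₁ * t ^ m := by
        rw [hadef, hbdef, hC₂def]; push_cast; ring
      have hkey := key_step C₁ hC₁ m hm t a b ht htm hb2 hba ha1 hab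
      have hx0 : (0:ℝ) ≤ x := le_trans ht.le hlo
      have hstep : φ^[j+1] t = φ x := Function.iterate_succ_apply' _ _ _
      have hφx : φ x = x + C₁ * x ^ (m+1) := rfl
      have hφy : φ (t * a ^ (-e)) = t * a ^ (-e) + C₁ * (t * a ^ (-e)) ^ (m+1) := rfl
      have hmono : φ x ≤ φ (t * a ^ (-e)) := by
        rw [hφx, hφy]
        exact add_le_add hhi (mul_le_mul_of_nonneg_left (pow_le_pow_left₀ hx0 hhi (m+1)) hC₁.le)
      constructor
      · rw [hstep, hφx]
        have hc : 0 ≤ C₁ * x ^ (m+1) := by positivity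
        linarith
      · rw [hstep]
        calc φ x ≤ φ (t * a ^ (-e)) := hmono
          _ = t * a ^ (-e) + C₁ * (t * a ^ (-e)) ^ (m+1) := hφy
          _ ≤ t * b ^ (-e) := hkey
  obtain ⟨hlo, hhi⟩ := main k hk'
  have hrw : (1 - (k:ℝ) * C₂ * t ^ m) = (1 - (k:ℝ) * (C₂ * t ^ m)) := by ring
  have ha2 : 1/2 ≤ 1 - (k:ℝ) * (C₂ * t ^ m) := by linarith
  have hapos : (0:ℝ) < 1 - (k:ℝ) * (C₂ * t ^ m) := by linarith
  have h2e : (1 - (k:ℝ) * (C₂ * t ^ m)) ^ (-e) ≤ 2 := by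
    have hinv : (1 - (k:ℝ) * (C₂ * t ^ m))⁻¹ ≤ 2 := by
      rw [inv_le_comm₀ hapos (by norm_num)]; linarith
    have h1 : (1 - (k:ℝ) * (C₂ * t ^ m)) ^ (-e) = ((1 - (k:ℝ) * (C₂ * t ^ m))⁻¹) ^ e := by
      rw [← Real.rpow_neg_one, ← Real.rpow_mul hapos.le]
      congr 1
      ring
    rw [h1]
    calc ((1 - (k:ℝ) * (C₂ * t ^ m))⁻¹) ^ e ≤ (2:ℝ) ^ e :=
          Real.rpow_le_rpow (by positivity) hinv (by positivity)
      _ ≤ (2:ℝ) ^ (1:ℝ) := by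
          apply Real.rpow_le_rpow_of_exponent_le (by norm_num)
          rw [he, div_le_one hmR]
          exact_mod_cast hm
      _ = 2 := Real.rpow_one 2
  refine ⟨by rw [hrw]; exact hhi, ?_⟩
  calc φ^[k] t ≤ t * (1 - (k:ℝ) * (C₂ * t ^ m)) ^ (-e) := hhi
    _ ≤ t * 2 := mul_le_mul_of_nonneg_left h2e ht.le
    _ = 2 * t := mul_comm _ _
end

section
/- Let g be a germ of holomorphic diffeomorphism at 0 with |g'(0)| ≠ 1. Then g is holomorphically linearizable: there exists a germ of holomorphic diffeomorphism h with h(0) = 0, h'(0) = 1, such that h^{-1} ∘ g ∘ h (z) = g'(0)·z near 0. -/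
open Filter
open Metric
open scoped Topology

lemma analytic_local_inverse (f : ℂ → ℂ) (hf : AnalyticAt ℂ f 0) (h0 : f 0 = 0)
    (hd : deriv f 0 ≠ 0) :
    ∃ finv : ℂ → ℂ, AnalyticAt ℂ finv 0 ∧ finv 0 = 0 ∧ deriv finv 0 = (deriv f 0)⁻¹ ∧
      (∀ᶠ z in 𝓝 0, finv (f z) = z) ∧ (∀ᶠ z in 𝓝 0, f (finv z) = z) := by
  obtain ⟨p, hp⟩ := id hf
  have hps : HasStrictDerivAt f (deriv f 0) 0 := by
    have := hp.hasStrictDerivAt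
    rwa [← hp.deriv] at this
  set F := hps.hasStrictFDerivAt_equiv hd with hF
  set e := F.toOpenPartialHomeomorph f with he
  have hcoe : (e : ℂ → ℂ) = f := F.toOpenPartialHomeomorph_coe
  have hsource : (0:ℂ) ∈ e.source := F.mem_toOpenPartialHomeomorph_source
  have htarget : (0:ℂ) ∈ e.target := by
    have := F.image_mem_toOpenPartialHomeomorph_target
    rwa [h0] at this
  have hsymm0 : e.symm 0 = 0 := by
    have := e.eventually_left_inverse hsource
    have h2 := this.self_of_nhds
    rw [hcoe, h0] at h2
    exact h2
  have hleft : ∀ᶠ z in 𝓝 (0:ℂ), e.symm (f z) = z := by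
    have := e.eventually_left_inverse hsource
    simpa [hcoe] using this
  have hright : ∀ᶠ z in 𝓝 (0:ℂ), f (e.symm z) = z := by
    have := e.eventually_right_inverse' hsource
    rw [hcoe, h0] at this
    exact this
  have hanalytic : AnalyticAt ℂ e.symm 0 := by
    obtain ⟨s, hs_mem, hs_an⟩ := hf.exists_mem_nhds_analyticOnNhd
    have hcont : ContinuousAt (deriv f) 0 := (hs_an.deriv 0 (mem_of_mem_nhds hs_mem)).continuousAt
    have hne : ∀ᶠ y in 𝓝 (0:ℂ), deriv f y ≠ 0 := hcont.eventually_ne hd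
    have han : ∀ᶠ y in 𝓝 (0:ℂ), DifferentiableAt ℂ f y :=
      hf.eventually_analyticAt.mono fun y hy => hy.differentiableAt
    obtain ⟨U, hU, hUo, hU0⟩ := _root_.eventually_nhds_iff.mp (hne.and han)
    set t := e.target ∩ e.symm ⁻¹' U with ht
    have hto : IsOpen t := e.isOpen_inter_preimage_symm hUo
    have h0t : (0:ℂ) ∈ t := ⟨htarget, by simp [hsymm0, hU0]⟩
    have hdiff : DifferentiableOn ℂ e.symm t := by
      intro y hy
      obtain ⟨hyU, hyne⟩ := hU _ hy.2
      have hder : HasDerivAt f (deriv f (e.symm y)) (e.symm y) := hyne.hasDerivAt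
      rw [← hcoe] at hder
      exact ((e.hasDerivAt_symm hy.1 hyU hder).differentiableAt).differentiableWithinAt
    exact hdiff.analyticAt (hto.mem_nhds h0t)
  refine ⟨e.symm, hanalytic, hsymm0, ?_, hleft, hright⟩
  · have : HasStrictDerivAt (hps.localInverse f _ _ hd) (deriv f 0)⁻¹ (f 0) := hps.to_localInverse hd
    rw [h0] at this
    exact this.hasDerivAt.deriv

lemma tuo_add_left {F : ℕ → ℂ → ℂ} {f b : ℂ → ℂ} {s : Set ℂ}
    (h : TendstoUniformlyOn F f atTop s) :
    TendstoUniformlyOn (fun n z => b z + F n z) (fun z => b z + f z) atTop s := by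
  rw [Metric.tendstoUniformlyOn_iff] at h ⊢
  intro ε hε
  filter_upwards [h ε hε] with n hn z hz
  simpa [dist_add_left] using hn z hz

set_option maxHeartbeats 1000000 in
lemma koenigs_attracting (g : ℂ → ℂ) (hg : AnalyticAt ℂ g 0) (hg0 : g 0 = 0)
    (hg' : deriv g 0 ≠ 0) (hlt : ‖deriv g 0‖ < 1) :
    ∃ φ : ℂ → ℂ, AnalyticAt ℂ φ 0 ∧ φ 0 = 0 ∧ deriv φ 0 = 1 ∧
      (∀ᶠ z in 𝓝 0, φ (g z) = deriv g 0 * φ z) := by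
  set lam := deriv g 0 with hlam
  set l := ‖lam‖ with hldef
  have hl0 : 0 < l := norm_pos_iff.mpr hg'
  have hl1 : l < 1 := hlt
  set c := Real.sqrt ((l + l^2)/2) with hcdef
  have hc2 : c^2 = (l + l^2)/2 := Real.sq_sqrt (by nlinarith)
  have hc0 : 0 ≤ c := Real.sqrt_nonneg _
  have hlc : l < c := by nlinarith
  have hc1 : c < 1 := by nlinarith
  have hc2l : c^2 < l := by nlinarith
  -- Taylor bound : g y - lam * y = O(‖y‖²)
  obtain ⟨p, hp⟩ := id hg
  have hO : (fun y : ℂ => g y - lam * y) =O[𝓝 0] fun y => ‖y‖^2 := by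
    have := hp.isBigO_sub_partialSum_pow 2
    have hps : ∀ y : ℂ, p.partialSum 2 y = lam * y := by
      intro y
      have h0 : p.coeff 0 = 0 := by
        have h := hp.coeff_zero (fun _ => (1:ℂ))
        rw [hg0] at h
        exact h
      have h1 : p.coeff 1 = lam := by
        rw [hlam, hp.deriv]; rfl
      rw [FormalMultilinearSeries.partialSum, Finset.sum_range_succ, Finset.sum_range_one,
        FormalMultilinearSeries.apply_eq_pow_smul_coeff,
        FormalMultilinearSeries.apply_eq_pow_smul_coeff, h0, h1]
      simp only [pow_zero, pow_one, one_smul, smul_eq_mul, smul_zero, mul_zero, zero_add, add_zero]; ring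
    simpa [hps, hg0] using this
  obtain ⟨C, hC, hCO⟩ := hO.exists_pos
  have hbound : ∀ᶠ y in 𝓝 (0:ℂ), ‖g y - lam * y‖ ≤ C * ‖y‖^2 := by
    have := hCO.bound
    filter_upwards [this] with y hy
    simpa [abs_of_nonneg (sq_nonneg ‖y‖)] using hy
  have han : ∀ᶠ y in 𝓝 (0:ℂ), AnalyticAt ℂ g y := hg.eventually_analyticAt
  obtain ⟨ε, hε, hball⟩ := Metric.eventually_nhds_iff_ball.mp (hbound.and han)
  set r := min (ε/2) ((c - l)/C) with hrdef
  have hr0 : 0 < r := lt_min (by linarith) (div_pos (by linarith) hC)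
  set B := Metric.ball (0:ℂ) r with hBdef
  have hmem : ∀ z ∈ B, ‖g z - lam * z‖ ≤ C * ‖z‖^2 ∧ AnalyticAt ℂ g z := by
    intro z hz
    apply hball
    have : ‖z‖ < r := by simpa [hBdef, Metric.mem_ball] using hz
    simp only [Metric.mem_ball, dist_zero_right]
    calc ‖z‖ < r := this
      _ ≤ ε/2 := min_le_left _ _
      _ < ε := by linarith
  have hgB : ∀ z ∈ B, ‖g z‖ ≤ c * ‖z‖ := by
    intro z hz
    have hz' : ‖z‖ < r := by simpa [hBdef] using hz
    have h1 := (hmem z hz).1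
    have h2 : C * ‖z‖ ≤ c - l := by
      have : ‖z‖ ≤ (c - l)/C := le_of_lt (lt_of_lt_of_le hz' (min_le_right _ _))
      calc C * ‖z‖ ≤ C * ((c-l)/C) := by nlinarith
        _ = c - l := by field_simp
    calc ‖g z‖ = ‖lam * z + (g z - lam * z)‖ := by ring_nf
      _ ≤ ‖lam * z‖ + ‖g z - lam * z‖ := norm_add_le _ _
      _ ≤ l * ‖z‖ + C * ‖z‖^2 := by
          rw [norm_mul]
          exact add_le_add le_rfl h1
      _ = l * ‖z‖ + (C * ‖z‖) * ‖z‖ := by ring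
      _ ≤ l * ‖z‖ + (c - l) * ‖z‖ := by nlinarith [norm_nonneg z]
      _ = c * ‖z‖ := by ring
  have hiterB : ∀ n : ℕ, ∀ z ∈ B, ‖g^[n] z‖ ≤ c^n * ‖z‖ := by
    intro n
    induction n with
    | zero => intro z hz; simp
    | succ n ih =>
      intro z hz
      have hz' : ‖z‖ < r := by simpa [hBdef] using hz
      have h1 : ‖g^[n] z‖ ≤ c^n * ‖z‖ := ih z hz
      have hzB : g^[n] z ∈ B := by
        simp only [hBdef, Metric.mem_ball, dist_zero_right]
        calc ‖g^[n] z‖ ≤ c^n * ‖z‖ := h1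
          _ ≤ 1 * ‖z‖ := by
              have : c^n ≤ 1 := pow_le_one₀ hc0 hc1.le
              nlinarith [norm_nonneg z]
          _ = ‖z‖ := one_mul _
          _ < r := hz'
      rw [Function.iterate_succ_apply']
      calc ‖g (g^[n] z)‖ ≤ c * ‖g^[n] z‖ := hgB _ hzB
        _ ≤ c * (c^n * ‖z‖) := by nlinarith
        _ = c^(n+1) * ‖z‖ := by ring
  have hmemB : ∀ n : ℕ, ∀ z ∈ B, g^[n] z ∈ B := by
    intro n z hz
    have hz' : ‖z‖ < r := by simpa [hBdef] using hz
    simp only [hBdef, Metric.mem_ball, dist_zero_right]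
    calc ‖g^[n] z‖ ≤ c^n * ‖z‖ := hiterB n z hz
      _ ≤ 1 * ‖z‖ := by
          have : c^n ≤ 1 := pow_le_one₀ hc0 hc1.le
          nlinarith [norm_nonneg z]
      _ = ‖z‖ := one_mul _
      _ < r := hz'
  -- the approximating sequence and its limit
  set d : ℕ → ℂ → ℂ := fun n z => (g (g^[n] z) - lam * g^[n] z) / lam^(n+1) with hddef
  set Φ : ℕ → ℂ → ℂ := fun n z => g^[n] z / lam^n with hPhidef
  set φ : ℂ → ℂ := fun z => z + ∑' n, d n z with hphidef
  have hlamn : ∀ n : ℕ, (lam:ℂ)^n ≠ 0 := fun n => pow_ne_zero n hg'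
  have htel : ∀ n z, Φ n z = z + ∑ k ∈ Finset.range n, d k z := by
    intro n z
    have hstep : ∀ k, d k z = Φ (k+1) z - Φ k z := by
      intro k
      show (g (g^[k] z) - lam * g^[k] z) / lam^(k+1) = g^[k+1] z / lam^(k+1) - g^[k] z / lam^k
      rw [Function.iterate_succ_apply']
      field_simp [pow_succ]
      ring
    simp only [hstep]
    rw [Finset.sum_range_sub (fun k => Φ k z)]
    simp [hPhidef]
  set u : ℕ → ℝ := fun n => (C * r^2 / l) * (c^2/l)^n with hudef
  have hsum : Summable u := by
    apply Summable.mul_left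
    exact summable_geometric_of_lt_one (by positivity) ((div_lt_one hl0).mpr hc2l)
  have hdb : ∀ n z, z ∈ B → ‖d n z‖ ≤ u n := by
    intro n z hz
    have hz' : ‖z‖ < r := by simpa [hBdef] using hz
    set w := g^[n] z with hwdef
    have hwB : w ∈ B := hmemB n z hz
    have hw1 : ‖w‖ ≤ c^n * r := by
      calc ‖w‖ ≤ c^n * ‖z‖ := hiterB n z hz
        _ ≤ c^n * r := by
            have := pow_nonneg hc0 n
            nlinarith
    have hw0 : (0:ℝ) ≤ ‖w‖ := norm_nonneg _
    have hnum : ‖g w - lam * w‖ ≤ C * (c^n * r)^2 := by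
      calc ‖g w - lam * w‖ ≤ C * ‖w‖^2 := (hmem w hwB).1
        _ ≤ C * (c^n * r)^2 :=
            mul_le_mul_of_nonneg_left (pow_le_pow_left₀ hw0 hw1 2) hC.le
    have hden : ‖(lam:ℂ)^(n+1)‖ = l^(n+1) := by rw [norm_pow]
    have : ‖d n z‖ = ‖g w - lam * w‖ / l^(n+1) := by
      rw [hddef]
      simp only [norm_div, hden]
      rfl
    rw [this]
    have hlpow : (0:ℝ) < l^(n+1) := pow_pos hl0 _
    have h1 : ‖g w - lam * w‖ / l^(n+1) ≤ C * (c^n * r)^2 / l^(n+1) :=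
      (div_le_div_iff_of_pos_right hlpow).mpr hnum
    refine le_trans h1 (le_of_eq ?_)
    show C * (c^n*r)^2 / l^(n+1) = C * r ^ 2 / l * (c ^ 2 / l) ^ n
    have hpow : (c^n)^2 = (c^2)^n := by rw [← pow_mul, ← pow_mul, Nat.mul_comm]
    rw [mul_pow, hpow, div_pow, pow_succ]
    field_simp
    ring
  have htu0 : TendstoUniformlyOn (fun N z => ∑ n ∈ Finset.range N, d n z)
      (fun z => ∑' n, d n z) atTop B :=
    tendstoUniformlyOn_tsum_nat hsum (fun n z hz => hdb n z hz)
  have htu : TendstoUniformlyOn Φ φ atTop B := by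
    have h := tuo_add_left (b := fun z => z) htu0
    apply h.congr
    filter_upwards with N z hz
    exact (htel N z).symm
  have htlu := htu.tendstoLocallyUniformlyOn
  have hBopen : IsOpen B := isOpen_ball
  have h0B : (0:ℂ) ∈ B := mem_ball_self hr0
  have hgdiffB : ∀ z ∈ B, DifferentiableAt ℂ g z := fun z hz => ((hmem z hz).2).differentiableAt
  have hiterdiff : ∀ n, DifferentiableOn ℂ (g^[n]) B := by
    intro n
    induction n with
    | zero => simpa using differentiableOn_id
    | succ n ih =>
      rw [Function.iterate_succ']
      exact DifferentiableOn.comp (fun w hw => (hgdiffB w hw).differentiableWithinAt) ih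
        (fun z hz => hmemB n z hz)
  have hPhidiff : ∀ N, DifferentiableOn ℂ (Φ N) B := fun N => (hiterdiff N).div_const _
  have hphidiff : DifferentiableOn ℂ φ B :=
    htlu.differentiableOn (Eventually.of_forall hPhidiff) hBopen
  have hphian : AnalyticAt ℂ φ 0 := hphidiff.analyticAt (hBopen.mem_nhds h0B)
  have hfix : ∀ n : ℕ, g^[n] 0 = 0 := fun n => Function.iterate_fixed hg0 n
  have hiterderiv : ∀ n : ℕ, HasDerivAt (g^[n]) (lam^n) 0 := by
    intro n
    induction n with
    | zero => simpa using hasDerivAt_id (0:ℂ)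
    | succ n ih =>
      rw [Function.iterate_succ']
      have hgd : HasDerivAt g lam (g^[n] 0) := by
        rw [hfix n]
        exact hg.differentiableAt.hasDerivAt
      have := HasDerivAt.comp (0:ℂ) hgd ih
      simpa [pow_succ, mul_comm] using this
  have hPhideriv : ∀ N, deriv (Φ N) 0 = 1 := by
    intro N
    have h1 : deriv (Φ N) 0 = deriv (g^[N]) 0 / lam^N := deriv_div_const _
    rw [h1, (hiterderiv N).deriv, div_self (hlamn N)]
  have hphideriv : deriv φ 0 = 1 := by
    have hd := (htlu.deriv (Eventually.of_forall hPhidiff) hBopen).tendsto_at h0B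
    have hone : Tendsto (fun _ : ℕ => (1:ℂ)) atTop (𝓝 (deriv φ 0)) := by
      apply hd.congr
      intro N
      simp only [Function.comp_apply, hPhideriv N]
    exact tendsto_nhds_unique hone tendsto_const_nhds
  have hphi0 : φ 0 = 0 := by
    have hd0 : ∀ n, d n 0 = 0 := by
      intro n
      rw [hddef]
      simp [hfix n, hg0]
    rw [hphidef]
    simp [hd0, tsum_zero]
  have hpt : ∀ z ∈ B, Tendsto (fun N => Φ N z) atTop (𝓝 (φ z)) := fun z hz => htlu.tendsto_at hz
  have hfe : ∀ z ∈ B, φ (g z) = lam * φ z := by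
    intro z hz
    have hz' : ‖z‖ < r := by simpa [hBdef] using hz
    have hgz : g z ∈ B := by
      simp only [hBdef, mem_ball, dist_zero_right]
      calc ‖g z‖ ≤ c * ‖z‖ := hgB z hz
        _ ≤ 1 * ‖z‖ := by nlinarith [norm_nonneg z]
        _ < r := by rw [one_mul]; exact hz'
    have h1 : Tendsto (fun N => Φ N (g z)) atTop (𝓝 (φ (g z))) := hpt _ hgz
    have h2 : Tendsto (fun N => lam * Φ (N+1) z) atTop (𝓝 (lam * φ z)) :=
      ((hpt z hz).comp (tendsto_add_atTop_nat 1)).const_mul lam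
    have heq : (fun N => Φ N (g z)) = fun N => lam * Φ (N+1) z := by
      funext N
      show g^[N] (g z) / lam^N = lam * (g^[N+1] z / lam^(N+1))
      rw [← Function.iterate_succ_apply]
      field_simp [pow_succ]
      ring
    rw [heq] at h1
    exact tendsto_nhds_unique h1 h2
  refine ⟨φ, hphian, hphi0, hphideriv, ?_⟩
  filter_upwards [hBopen.mem_nhds h0B] with z hz using hfe z hz

lemma koenigs_lin_attracting (g : ℂ → ℂ) (hg : AnalyticAt ℂ g 0) (hg0 : g 0 = 0)
    (hg' : deriv g 0 ≠ 0) (hlt : ‖deriv g 0‖ < 1) :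
    ∃ h : ℂ → ℂ, AnalyticAt ℂ h 0 ∧ h 0 = 0 ∧ deriv h 0 = 1 ∧
      ∀ᶠ z in 𝓝 (0 : ℂ), g (h z) = h (deriv g 0 * z) := by
  obtain ⟨φ, hphian, hphi0, hphid, hfe⟩ := koenigs_attracting g hg hg0 hg' hlt
  obtain ⟨h, hhan, hh0, hhd, hleft, hright⟩ :=
    analytic_local_inverse φ hphian hphi0 (by rw [hphid]; exact one_ne_zero)
  refine ⟨h, hhan, hh0, by rw [hhd, hphid, inv_one], ?_⟩
  have hth : Tendsto h (𝓝 0) (𝓝 0) := by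
    have := hhan.continuousAt.tendsto
    rwa [hh0] at this
  have htg : Tendsto (fun z => g (h z)) (𝓝 0) (𝓝 0) := by
    have hcg : Tendsto g (𝓝 0) (𝓝 0) := by
      have := hg.continuousAt.tendsto
      rwa [hg0] at this
    exact hcg.comp hth
  have e1 : ∀ᶠ z in 𝓝 (0:ℂ), h (φ (g (h z))) = g (h z) := htg.eventually hleft
  have e2 : ∀ᶠ z in 𝓝 (0:ℂ), φ (g (h z)) = deriv g 0 * φ (h z) := hth.eventually hfe
  filter_upwards [e1, e2, hright] with z h1 h2 h3
  calc g (h z) = h (φ (g (h z))) := h1.symm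
    _ = h (deriv g 0 * φ (h z)) := by rw [h2]
    _ = h (deriv g 0 * z) := by rw [h3]

/-- Koenigs' linearization theorem: a germ of holomorphic diffeomorphism g at 0 with
|g'(0)| ≠ 1 is holomorphically linearizable: there is a germ h with h(0)=0, h'(0)=1 and
h⁻¹∘g∘h(z) = g'(0)·z near 0 (equivalently g(h z) = h(g'(0)·z) near 0). -/
theorem stmt8 (g : ℂ → ℂ) (hg : AnalyticAt ℂ g 0) (hg0 : g 0 = 0)
    (hg' : deriv g 0 ≠ 0) (hmult : ‖deriv g 0‖ ≠ 1) :
    ∃ h : ℂ → ℂ, AnalyticAt ℂ h 0 ∧ h 0 = 0 ∧ deriv h 0 = 1 ∧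
      ∀ᶠ z in nhds (0 : ℂ), g (h z) = h (deriv g 0 * z) := by
  rcases lt_or_gt_of_ne hmult with hlt | hgt
  · exact koenigs_lin_attracting g hg hg0 hg' hlt
  · obtain ⟨gi, hgian, hgi0, hgid, hgil, hgir⟩ := analytic_local_inverse g hg hg0 hg'
    have hgid' : deriv gi 0 ≠ 0 := by rw [hgid]; exact inv_ne_zero hg'
    have hlt' : ‖deriv gi 0‖ < 1 := by
      rw [hgid, norm_inv]
      exact inv_lt_one_of_one_lt₀ hgt
    obtain ⟨h, hhan, hh0, hhd, h4⟩ := koenigs_lin_attracting gi hgian hgi0 hgid' hlt'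
    refine ⟨h, hhan, hh0, hhd, ?_⟩
    have hmul : Tendsto (fun z : ℂ => deriv g 0 * z) (𝓝 0) (𝓝 0) := by
      have : Continuous (fun z : ℂ => deriv g 0 * z) := by continuity
      simpa using this.tendsto (0:ℂ)
    have hth : Tendsto h (𝓝 0) (𝓝 0) := by
      have := hhan.continuousAt.tendsto
      rwa [hh0] at this
    have e1 : ∀ᶠ z in 𝓝 (0:ℂ), gi (h (deriv g 0 * z)) = h (deriv gi 0 * (deriv g 0 * z)) :=
      hmul.eventually h4
    have e2 : ∀ᶠ z in 𝓝 (0:ℂ), g (gi (h (deriv g 0 * z))) = h (deriv g 0 * z) :=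
      (hth.comp hmul).eventually hgir
    filter_upwards [e1, e2] with z h1 h2
    have harg : deriv gi 0 * (deriv g 0 * z) = z := by
      rw [hgid]
      field_simp
    rw [harg] at h1
    calc g (h z) = g (gi (h (deriv g 0 * z))) := by rw [h1]
      _ = h (deriv g 0 * z) := h2
end

section
/- A formal power series f(z) = λz + Σ_{n≥2} a_n z^n with λ = e^{2πiα}, α irrational, cannot commute (under formal composition) with a nondegenerate parabolic formal germ g(z) = μz + Σ_{n≥2} b_n z^n where μ is a root of unity and g^q ≠ id for q the order of μ, unless no such g exists; i.e., if f∘g = g∘f formally and μ^q = 1, then g^q = id. -/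
open Filter Function
open scoped Topology

lemma aux_dslope_analytic {f : ℂ → ℂ} {z₀ : ℂ} (hf : AnalyticAt ℂ f z₀) :
    AnalyticAt ℂ (dslope f z₀) z₀ := by
  obtain ⟨p, hp⟩ := hf
  exact ⟨p.fslope, hp.has_fpower_series_dslope_fslope⟩

lemma aux_lam_pow_ne_one {α : ℝ} (hα : Irrational α) {k : ℕ} (hk : k ≠ 0) :
    Complex.exp (2 * Real.pi * Complex.I * α) ^ k ≠ 1 := by
  intro h
  rw [← Complex.exp_nat_mul, Complex.exp_eq_one_iff] at h
  obtain ⟨n, hn⟩ := h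
  have hπ : (2:ℂ) * Real.pi * Complex.I ≠ 0 := by
    simp [Real.pi_ne_zero, Complex.I_ne_zero]
  have h2 : ((k : ℝ) * α : ℝ) = ((n : ℝ)) := by
    have : ((k:ℂ) * (α:ℂ)) = (n:ℂ) := by
      apply mul_left_cancel₀ hπ
      rw [show (2:ℂ) * Real.pi * Complex.I * ((k:ℂ)*(α:ℂ)) = (k:ℂ) * (2 * Real.pi * Complex.I * α) by ring, hn]
      ring
    exact_mod_cast this
  have hk' : (k : ℝ) ≠ 0 := Nat.cast_ne_zero.mpr hk
  apply hα
  exact ⟨(n : ℚ) / (k : ℚ), by push_cast; field_simp at h2 ⊢; linarith⟩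

/-- A germ f with multiplier e^{2πiα}, α irrational, cannot commute with a nondegenerate
parabolic germ: if g has multiplier μ with μ^q = 1 and f∘g = g∘f as germs at 0, then
g^q = id as a germ at 0 (so g is of finite order, not nondegenerate parabolic). -/
theorem stmt10 (f g : ℂ → ℂ) (α : ℝ) (hα : Irrational α) (μ : ℂ) (q : ℕ) (hq : 0 < q)
    (hfa : AnalyticAt ℂ f 0) (hga : AnalyticAt ℂ g 0)
    (hf0 : f 0 = 0) (hg0 : g 0 = 0)
    (hf' : deriv f 0 = Complex.exp (2 * Real.pi * Complex.I * α))
    (hg' : deriv g 0 = μ) (hg'0 : μ ≠ 0) (hμ : μ ^ q = 1)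
    (hcomm : ∀ᶠ z in nhds (0 : ℂ), f (g z) = g (f z)) :
    ∀ᶠ z in nhds (0 : ℂ), g^[q] z = z := by
  set L : ℂ := Complex.exp (2 * Real.pi * Complex.I * α) with hL
  have hL0 : L ≠ 0 := Complex.exp_ne_zero _
  -- iterates fix 0
  have hgk0 : ∀ n, g^[n] (0:ℂ) = 0 := fun n => Function.iterate_fixed hg0 n
  -- iterates analytic
  have hgka : ∀ n, AnalyticAt ℂ (g^[n]) 0 := by
    intro n
    induction n with
    | zero => simpa using analyticAt_id
    | succ n ih =>
      rw [Function.iterate_succ']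
      exact AnalyticAt.comp (by rw [hgk0 n]; exact hga) ih
  -- derivative of iterates
  have hgkd : ∀ n, deriv (g^[n]) 0 = μ ^ n := by
    intro n
    induction n with
    | zero => simp
    | succ n ih =>
      rw [Function.iterate_succ', deriv_comp (x := (0:ℂ)) (h := g^[n]) (by rw [hgk0 n]; exact hga.differentiableAt)
        (hgka n).differentiableAt, hgk0 n, hg', ih]
      ring
  -- commutation with iterates
  have hcommk : ∀ n, ∀ᶠ z in nhds (0:ℂ), f (g^[n] z) = g^[n] (f z) := by
    intro n
    induction n with
    | zero => simp
    | succ n ih =>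
      have htend : Tendsto (g^[n]) (nhds 0) (nhds (0:ℂ)) := by
        have := (hgka n).continuousAt
        rwa [ContinuousAt, hgk0 n] at this
      filter_upwards [htend.eventually hcomm, ih] with z h1 h2
      rw [Function.iterate_succ_apply', Function.iterate_succ_apply', h1, h2]
  set h : ℂ → ℂ := g^[q] with hh
  have ha : AnalyticAt ℂ h 0 := hgka q
  have h0 : h 0 = 0 := hgk0 q
  have hd : deriv h 0 = 1 := by rw [hh, hgkd q, hμ]
  have hcommh : ∀ᶠ z in nhds (0:ℂ), f (h z) = h (f z) := hcommk q
  -- φ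
  set φ : ℂ → ℂ := fun z => h z - z with hφ
  have hφa : AnalyticAt ℂ φ 0 := ha.sub analyticAt_id
  have hφ0 : φ 0 = 0 := by simp [hφ, h0]
  have hφd : deriv φ 0 = 0 := by
    have hder : HasDerivAt φ (deriv h 0 - 1) 0 :=
      (ha.differentiableAt.hasDerivAt).sub (hasDerivAt_id 0)
    rw [hder.deriv, hd]; ring
  by_contra hne
  have hφne : ¬ ∀ᶠ z in nhds (0:ℂ), φ z = 0 := by
    intro hcon
    apply hne
    filter_upwards [hcon] with z hz
    rw [hφ] at hz
    have : h z = z := by linear_combination hz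
    rwa [hh] at this
  obtain ⟨m, ψ, hψa, hψ0, hφeq⟩ := hφa.exists_eventuallyEq_pow_smul_nonzero_iff.mpr hφne
  simp only [sub_zero, smul_eq_mul] at hφeq
  -- m ≥ 2
  have hm0 : m ≠ 0 := by
    intro hm
    subst hm
    have := hφeq.self_of_nhds
    simp [hφ0] at this
    exact hψ0 this.symm
  have hm1 : m ≠ 1 := by
    intro hm
    subst hm
    have hde : deriv φ 0 = deriv (fun z => z ^ 1 * ψ z) 0 :=
      Filter.EventuallyEq.deriv_eq hφeq
    have : deriv (fun z : ℂ => z ^ 1 * ψ z) 0 = ψ 0 := by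
      simp only [pow_one]
      have hder : HasDerivAt (fun z : ℂ => z * ψ z) (1 * ψ 0 + 0 * deriv ψ 0) 0 :=
        (hasDerivAt_id 0).mul hψa.differentiableAt.hasDerivAt
      rw [hder.deriv]; ring
    rw [hφd, this] at hde
    exact hψ0 hde.symm
  have hm2 : 2 ≤ m := by omega
  -- u, v
  set u : ℂ → ℂ := dslope f 0 with hu
  have hua : AnalyticAt ℂ u 0 := aux_dslope_analytic hfa
  have hu0 : u 0 = L := by rw [hu, dslope_same, hf']
  have hfu : ∀ w, f w = w * u w := by
    intro w
    have := sub_smul_dslope f 0 w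
    simp only [sub_zero, smul_eq_mul, hf0] at this
    rw [← hu] at this
    linear_combination -this
  -- second order expansion of f
  set v : ℂ → ℂ := dslope u 0 with hv
  have hva : AnalyticAt ℂ v 0 := aux_dslope_analytic hua
  have hfv : ∀ w, f w = L * w + w ^ 2 * v w := by
    intro w
    have h1 := sub_smul_dslope u 0 w
    simp only [sub_zero, smul_eq_mul, hu0] at h1
    rw [← hv] at h1
    rw [hfu w]
    linear_combination -w * h1
  have htf0 : Tendsto f (𝓝 0) (𝓝 (0 : ℂ)) := by
    have := hfa.continuousAt
    rwa [ContinuousAt, hf0] at this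
  have hth0 : Tendsto h (𝓝 0) (𝓝 (0 : ℂ)) := by
    have := ha.continuousAt
    rwa [ContinuousAt, h0] at this
  have hφneq : ∀ᶠ z in 𝓝[≠] (0 : ℂ), φ z ≠ 0 := by
    filter_upwards [nhdsWithin_le_nhds hφeq,
      nhdsWithin_le_nhds (hψa.continuousAt.eventually_ne hψ0), self_mem_nhdsWithin]
      with z h1 h2 h3
    have h3' : z ≠ 0 := h3
    rw [h1]
    exact mul_ne_zero (pow_ne_zero _ h3') h2
  -- first limit : φ(f z)/φ z → L ^ m
  have hA1 : Tendsto (fun z => φ (f z) / φ z) (𝓝[≠] (0 : ℂ)) (𝓝 (L ^ m)) := by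
    have hev : ∀ᶠ z in 𝓝[≠] (0 : ℂ),
        u z ^ m * (ψ (f z) / ψ z) = φ (f z) / φ z := by
      filter_upwards [(htf0.mono_left nhdsWithin_le_nhds).eventually hφeq,
        nhdsWithin_le_nhds hφeq,
        nhdsWithin_le_nhds (hψa.continuousAt.eventually_ne hψ0), self_mem_nhdsWithin]
        with z h1 h2 h3 h4
      have h4' : z ≠ 0 := h4
      rw [h1, h2, hfu z]
      field_simp
      ring
    have htu : Tendsto u (𝓝[≠] (0 : ℂ)) (𝓝 L) := by
      have := hua.continuousAt.tendsto.mono_left (nhdsWithin_le_nhds (s := {(0:ℂ)}ᶜ))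
      rwa [hu0] at this
    have htψf : Tendsto (fun z => ψ (f z)) (𝓝[≠] (0 : ℂ)) (𝓝 (ψ 0)) :=
      hψa.continuousAt.tendsto.comp (htf0.mono_left nhdsWithin_le_nhds)
    have htψ : Tendsto ψ (𝓝[≠] (0 : ℂ)) (𝓝 (ψ 0)) :=
      hψa.continuousAt.tendsto.mono_left nhdsWithin_le_nhds
    have hlim : Tendsto (fun z => u z ^ m * (ψ (f z) / ψ z)) (𝓝[≠] (0 : ℂ))
        (𝓝 (L ^ m * (ψ 0 / ψ 0))) := (htu.pow m).mul (htψf.div htψ hψ0)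
    rw [div_self hψ0, mul_one] at hlim
    exact hlim.congr' hev
  -- Lipschitz bound for v near 0
  obtain ⟨K, t, ht, hlip⟩ := (hva.contDiffAt (n := 1)).exists_lipschitzOnWith
  have hht : ∀ᶠ z in 𝓝 (0 : ℂ), h z ∈ t := hth0.eventually (eventually_of_mem ht fun x hx => hx)
  -- second limit : φ(f z)/φ z → L
  have hA2 : Tendsto (fun z => φ (f z) / φ z) (𝓝[≠] (0 : ℂ)) (𝓝 L) := by
    have hev : ∀ᶠ z in 𝓝[≠] (0 : ℂ),
        (fun z => L + (h z + z) * v (h z) + z ^ 2 * ((v (h z) - v z) / φ z)) z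
          = φ (f z) / φ z := by
      filter_upwards [hφneq, nhdsWithin_le_nhds hcommh] with z h1 h2
      have hφz : φ z = h z - z := rfl
      have e1 : φ (f z) = f (h z) - f z := by
        show h (f z) - f z = f (h z) - f z
        rw [h2]
      have key : φ (f z) = (L + (h z + z) * v (h z)) * φ z + z ^ 2 * (v (h z) - v z) := by
        rw [e1, hfv (h z), hfv z, hφz]
        ring
      rw [key]
      field_simp
    have hT : Tendsto (fun z => z ^ 2 * ((v (h z) - v z) / φ z)) (𝓝[≠] (0 : ℂ)) (𝓝 0) := by
      apply squeeze_zero_norm' (a := fun z : ℂ => (K : ℝ) * ‖z‖ ^ 2)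
      · filter_upwards [hφneq, nhdsWithin_le_nhds hht,
          nhdsWithin_le_nhds (eventually_of_mem ht fun x hx => hx)] with z h1 h2 h3
        have hφz : φ z = h z - z := rfl
        have hbd : ‖v (h z) - v z‖ ≤ (K : ℝ) * ‖φ z‖ := by
          have := hlip.dist_le_mul (h z) h2 z h3
          rw [dist_eq_norm, dist_eq_norm] at this
          rwa [hφz]
        calc ‖z ^ 2 * ((v (h z) - v z) / φ z)‖
            = ‖z‖ ^ 2 * (‖v (h z) - v z‖ / ‖φ z‖) := by
              rw [norm_mul, norm_pow, norm_div]
          _ ≤ ‖z‖ ^ 2 * (K : ℝ) := by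
              apply mul_le_mul_of_nonneg_left _ (by positivity)
              rw [div_le_iff₀ (norm_pos_iff.mpr h1)]
              exact hbd
          _ = (K : ℝ) * ‖z‖ ^ 2 := mul_comm _ _
      · have : Tendsto (fun z : ℂ => (K : ℝ) * ‖z‖ ^ 2) (𝓝 0) (𝓝 ((K : ℝ) * ‖(0:ℂ)‖ ^ 2)) :=
          tendsto_const_nhds.mul ((continuous_norm.tendsto (0 : ℂ)).pow 2)
        simpa using this.mono_left nhdsWithin_le_nhds
    have hthp : Tendsto h (𝓝[≠] (0 : ℂ)) (𝓝 0) := hth0.mono_left nhdsWithin_le_nhds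
    have htvz : Tendsto (fun z => v (h z)) (𝓝[≠] (0 : ℂ)) (𝓝 (v 0)) :=
      hva.continuousAt.tendsto.comp hthp
    have hmain : Tendsto (fun z => L + (h z + z) * v (h z) + z ^ 2 * ((v (h z) - v z) / φ z))
        (𝓝[≠] (0 : ℂ)) (𝓝 (L + (0 + 0) * v 0 + 0)) :=
      (tendsto_const_nhds.add ((hthp.add (tendsto_id.mono_left nhdsWithin_le_nhds)).mul htvz)).add hT
    simp only [add_zero, zero_add, zero_mul] at hmain
    exact hmain.congr' hev
  have hLm : L ^ m = L := tendsto_nhds_unique hA1 hA2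
  have hml : L ^ (m - 1) * L = 1 * L := by
    rw [← pow_succ, Nat.sub_add_cancel (by omega), one_mul]
    exact hLm
  have hfin : L ^ (m - 1) = 1 := mul_right_cancel₀ hL0 hml
  exact absurd hfin (aux_lam_pow_ne_one hα (by omega))
end
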